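/- Let Δ be a finite set of positive CNF formulae, ψ ∈ Δ, and α = ⋀_{i∈I} C_i a positive CNF formula with positive clauses C_i. Then there exists a minimal support Φ ⊆ Δ for α with ψ ∈ Φ (i.e., Φ is consistent, Φ ⊨ α, no proper subset of Φ entails α, and ψ ∈ Φ) if and only if there exists some i ∈ I such that the set Δ_i := {ψ} ∪ {δ ∈ Δ : δ ⊭ C_i} entails α. -/

import Mathlib

/-- Satisfaction of a positive CNF formula, represented as a list of positive clauses. -/
def satCNF (a : List (Finset ℕ)) (v : ℕ → Bool) : Prop :=
  ∀ c ∈ a, ∃ x ∈ c, v x = true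

/-- Entailment of a formula `α` by a set `S` of formulae. -/
def entailsCNF (S : Set (List (Finset ℕ))) (α : List (Finset ℕ)) : Prop :=
  ∀ v : ℕ → Bool, (∀ δ ∈ S, satCNF δ v) → satCNF α v

lemma satCNF_mono (a : List (Finset ℕ)) {v w : ℕ → Bool}
    (h : ∀ x, v x = true → w x = true) (hs : satCNF a v) : satCNF a w := by
  intro c hc
  obtain ⟨x, hx, hvx⟩ := hs c hc
  exact ⟨x, hx, h x hvx⟩

lemma entailsCNF_mono {S T : Set (List (Finset ℕ))} {α : List (Finset ℕ)}
    (hST : S ⊆ T) (h : entailsCNF S α) : entailsCNF T α := by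
  intro v hv
  exact h v fun δ hδ => hv δ (hST hδ)

/-- There is a minimal support `Φ ⊆ Δ` for `α` with `ψ ∈ Φ` iff some clause `Cl` of `α`
is such that `Δ_Cl = {ψ} ∪ {δ ∈ Δ | δ ⊭ Cl}` entails `α`.  (Clauses are nonempty, being
disjunctions of variables.) -/
theorem stmt9 (Δ : Finset (List (Finset ℕ))) (ψ α : List (Finset ℕ))
    (hψ : ψ ∈ Δ)
    (hΔpos : ∀ δ ∈ Δ, ∀ c ∈ δ, c.Nonempty) (hαpos : ∀ c ∈ α, c.Nonempty) :
    (∃ Φ : Finset (List (Finset ℕ)), Φ ⊆ Δ ∧ ψ ∈ Φ ∧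
        (∃ v : ℕ → Bool, ∀ δ ∈ Φ, satCNF δ v) ∧
        entailsCNF ↑Φ α ∧
        ∀ Φ' ⊂ Φ, ¬ entailsCNF ↑Φ' α)
    ↔ ∃ Cl ∈ α,
        entailsCNF
          ({ψ} ∪ {δ : List (Finset ℕ) | δ ∈ Δ ∧ ¬ ∀ v : ℕ → Bool, satCNF δ v → ∃ x ∈ Cl, v x = true})
          α := by
  classical
  constructor
  · rintro ⟨Φ, hΦΔ, hψΦ, _, hent, hmin⟩
    have hsub : Φ.erase ψ ⊂ Φ := Finset.erase_ssubset hψΦ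
    have h1 := hmin _ hsub
    rw [entailsCNF] at h1
    push_neg at h1
    obtain ⟨v, hv, hvα⟩ := h1
    rw [satCNF] at hvα
    push_neg at hvα
    obtain ⟨Cl, hClα, hCl⟩ := hvα
    refine ⟨Cl, hClα, entailsCNF_mono ?_ hent⟩
    intro δ hδ
    simp only [Finset.mem_coe] at hδ
    by_cases hδψ : δ = ψ
    · exact Or.inl hδψ
    · refine Or.inr ⟨hΦΔ hδ, fun hall => ?_⟩
      obtain ⟨x, hx, hvx⟩ := hall v (hv δ (by simpa [Finset.mem_erase, hδψ] using hδ))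
      exact hCl x hx hvx
  · rintro ⟨Cl, hClα, hent⟩
    set P : List (Finset ℕ) → Prop :=
      fun δ => ¬ ∀ v : ℕ → Bool, satCNF δ v → ∃ x ∈ Cl, v x = true with hP
    set Φ₀ : Finset (List (Finset ℕ)) := insert ψ (Δ.filter P) with hΦ₀
    have hΦ₀Δ : Φ₀ ⊆ Δ := by
      intro δ hδ
      rcases Finset.mem_insert.mp hδ with h | h
      · exact h ▸ hψ
      · exact (Finset.mem_filter.mp h).1
    have hΦ₀set : (↑Φ₀ : Set (List (Finset ℕ)))
        = {ψ} ∪ {δ : List (Finset ℕ) | δ ∈ Δ ∧ P δ} := by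
      ext δ
      simp [hΦ₀, Set.mem_insert_iff]
    have hentΦ₀ : entailsCNF ↑Φ₀ α := by rw [hΦ₀set]; exact hent
    -- choice of witnessing valuations
    have hch : ∀ δ, P δ → ∃ v : ℕ → Bool, satCNF δ v ∧ ∀ x ∈ Cl, v x = false := by
      intro δ hδ
      rw [hP] at hδ
      push_neg at hδ
      obtain ⟨v, hv1, hv2⟩ := hδ
      exact ⟨v, hv1, fun x hx => by simpa using hv2 x hx⟩
    let g : List (Finset ℕ) → ℕ → Bool :=
      fun δ => if h : P δ then (hch δ h).choose else fun _ => true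
    have hg1 : ∀ δ, P δ → satCNF δ (g δ) := by
      intro δ h; simp only [g, dif_pos h]; exact (hch δ h).choose_spec.1
    have hg2 : ∀ δ, P δ → ∀ x ∈ Cl, g δ x = false := by
      intro δ h; simp only [g, dif_pos h]; exact (hch δ h).choose_spec.2
    -- no subset avoiding ψ entails α
    have key : ¬ entailsCNF ↑(Φ₀.erase ψ) α := by
      intro hcon
      set V : ℕ → Bool := fun x => decide (∃ δ ∈ Φ₀.erase ψ, g δ x = true) with hV
      have hPmem : ∀ δ ∈ Φ₀.erase ψ, P δ := by
        intro δ hδ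
        have := (Finset.mem_erase.mp hδ)
        rcases Finset.mem_insert.mp this.2 with h | h
        · exact absurd h this.1
        · exact (Finset.mem_filter.mp h).2
      have hsat : ∀ δ ∈ (↑(Φ₀.erase ψ) : Set (List (Finset ℕ))), satCNF δ V := by
        intro δ hδ
        have hδ' : δ ∈ Φ₀.erase ψ := hδ
        refine satCNF_mono δ (v := g δ) (fun x hx => ?_) (hg1 δ (hPmem δ hδ'))
        simp only [hV, decide_eq_true_eq]
        exact ⟨δ, hδ', hx⟩
      have hα := hcon V hsat Cl hClα
      obtain ⟨x, hx, hVx⟩ := hα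
      simp only [hV, decide_eq_true_eq] at hVx
      obtain ⟨δ, hδ, hgδ⟩ := hVx
      rw [hg2 δ (hPmem δ hδ) x hx] at hgδ
      exact Bool.false_ne_true hgδ
    -- take a minimal entailing subset of Φ₀
    set s : Finset (Finset (List (Finset ℕ))) :=
      Φ₀.powerset.filter (fun Φ => entailsCNF ↑Φ α) with hs
    have hΦ₀s : Φ₀ ∈ s := by
      simp [hs, Finset.mem_filter, Finset.mem_powerset, hentΦ₀]
    obtain ⟨m, hm, hmmin⟩ : ∃ m ∈ s, ∀ x ∈ s, ¬x < m := by
      obtain ⟨m, hm1, hm2⟩ := Finset.exists_minimal (s := s) ⟨Φ₀, hΦ₀s⟩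
      exact ⟨m, hm1, fun x hx hlt => lt_irrefl _ (lt_of_lt_of_le hlt (hm2 hx hlt.le))⟩
    have hm' := Finset.mem_filter.mp hm
    have hmΦ₀ : m ⊆ Φ₀ := Finset.mem_powerset.mp hm'.1
    have hment : entailsCNF ↑m α := hm'.2
    have hψm : ψ ∈ m := by
      by_contra hψm
      refine key (entailsCNF_mono ?_ hment)
      intro δ hδ
      have hδ' : δ ∈ m := hδ
      exact Finset.mem_erase.mpr ⟨fun h => hψm (h ▸ hδ'), hmΦ₀ hδ'⟩
    refine ⟨m, fun δ hδ => hΦ₀Δ (hmΦ₀ hδ), hψm, ⟨fun _ => true, ?_⟩, hment, ?_⟩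
    · intro δ hδ c hc
      obtain ⟨x, hx⟩ := hΔpos δ (hΦ₀Δ (hmΦ₀ hδ)) c hc
      exact ⟨x, hx, rfl⟩
    · intro Φ' hΦ' hcon
      have : Φ' ∈ s := Finset.mem_filter.mpr
        ⟨Finset.mem_powerset.mpr (hΦ'.subset.trans hmΦ₀), hcon⟩
      exact hmmin Φ' this hΦ'
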